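/- The Mordell–Weil group E(Q) of the elliptic curve E: y^2 = x^3 + x^2 − 83x + 88 is isomorphic to Z/2Z. -/

import Mathlib

private lemma zmod2_of_16 (a : ℤ) (h : (ZMod.castHom (by norm_num : (2:ℕ) ∣ 16) (ZMod 2)) ((a : ZMod 16)) = 0) : (2:ℤ) ∣ a := by
  have : ((a : ZMod 2)) = 0 := by rw [← map_intCast (ZMod.castHom (by norm_num : (2:ℕ) ∣ 16) (ZMod 2)) a]; exact h
  exact (ZMod.intCast_zmod_eq_zero_iff_dvd a 2).mp this

/-- Equation (C): 25 s²t² = c² + s⁴ + 125 t⁴ has no solution with s, t coprime. -/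
private lemma lemC (s t c : ℤ) (hco : IsCoprime s t)
    (h : 25*s^2*t^2 = c^2 + s^4 + 125*t^4) : False := by
  have key : ∀ s t c : ZMod 16, 25*s^2*t^2 = c^2 + s^4 + 125*t^4 →
      (ZMod.castHom (by norm_num : (2:ℕ) ∣ 16) (ZMod 2)) s = 0 ∧
      (ZMod.castHom (by norm_num : (2:ℕ) ∣ 16) (ZMod 2)) t = 0 := by decide
  have h16 : (25*(s:ZMod 16)^2*(t:ZMod 16)^2 : ZMod 16) = (c:ZMod 16)^2 + (s:ZMod 16)^4 + 125*(t:ZMod 16)^4 := by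
    exact_mod_cast congrArg (fun z : ℤ => (z : ZMod 16)) h
  obtain ⟨hs, ht⟩ := key _ _ _ h16
  have h2s := zmod2_of_16 s hs
  have h2t := zmod2_of_16 t ht
  have := IsCoprime.isUnit_of_dvd' hco h2s h2t
  rw [Int.isUnit_iff] at this
  omega

/-- In equation (A'): V² = c⁴ − 50c²b² + 125b⁴, b must be even. -/
private lemma lemA'even (b c V : ℤ) (h : V^2 = c^4 - 50*c^2*b^2 + 125*b^4) : (2:ℤ) ∣ b := by
  have key : ∀ b c V : ZMod 16, V^2 = c^4 - 50*c^2*b^2 + 125*b^4 →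
      (ZMod.castHom (by norm_num : (2:ℕ) ∣ 16) (ZMod 2)) b = 0 := by decide
  apply zmod2_of_16
  apply key _ (c : ZMod 16) (V : ZMod 16)
  exact_mod_cast congrArg (fun z : ℤ => (z : ZMod 16)) h

private lemma prime5 : Prime (5:ℤ) := by norm_num

private lemma sq4 (a b R : ℤ) (hco : IsCoprime a b) (h : a^2*b^2 = R^4) :
    ∃ s t : ℤ, a^2 = s^4 ∧ b^2 = t^4 ∧ (s*t)^2 = R^2 := by
  have hfac : (a*b - R^2)*(a*b + R^2) = 0 := by ring_nf; linear_combination h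
  have hab : a*b = R^2 ∨ a*b = -R^2 := by
    rcases mul_eq_zero.mp hfac with h'|h'
    · left; linarith
    · right; linarith
  have key : ∃ s t : ℤ, a^2 = s^4 ∧ b^2 = t^4 := by
    rcases hab with h'|h'
    · obtain ⟨s, hs⟩ := Int.sq_of_isCoprime hco h'
      obtain ⟨t, ht⟩ := Int.sq_of_isCoprime hco.symm (by rw [mul_comm]; exact h')
      exact ⟨s, t, by rcases hs with h''|h'' <;> rw [h''] <;> ring,
        by rcases ht with h''|h'' <;> rw [h''] <;> ring⟩
    · obtain ⟨s, hs⟩ := Int.sq_of_isCoprime hco.neg_right (show a * (-b) = R^2 by rw [mul_neg, h']; ring)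
      obtain ⟨t, ht⟩ := Int.sq_of_isCoprime hco.neg_right.symm (show (-b) * a = R^2 by rw [neg_mul, mul_comm, h']; ring)
      refine ⟨s, t, by rcases hs with h''|h'' <;> rw [h''] <;> ring, ?_⟩
      rcases ht with h''|h''
      · linear_combination (t^2 - b)*h''
      · linear_combination (-t^2 - b)*h''
  obtain ⟨s, t, hs, ht⟩ := key
  refine ⟨s, t, hs, ht, ?_⟩
  have h4' : s^4 * t^4 = R^4 := by rw [← hs, ← ht]; exact h
  have h4 : ((s*t)^2)^2 = (R^2)^2 := by linear_combination h4'
  have hfac2 : ((s*t)^2 - R^2)*((s*t)^2 + R^2) = 0 := by linear_combination h4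
  rcases mul_eq_zero.mp hfac2 with h'|h'
  · linarith
  · nlinarith [sq_nonneg (s*t), sq_nonneg R]

/-- Factorization: coprime P Q, P*Q = 125 R⁴ ⇒ both are ± (fourth power) × {1,125}. -/
private lemma lemF0 (P Q R : ℤ) (hR : R ≠ 0) (hco : IsCoprime P Q)
    (h : P * Q = 125 * R^4) (h5 : (5:ℤ) ∣ Q) :
    ∃ s t : ℤ, (s*t)^2 = R^2 ∧
      ((P = s^4 ∧ Q = 125*t^4) ∨ (P = -s^4 ∧ Q = -(125*t^4))) := by
  have hco5 : IsCoprime (125:ℤ) P := by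
    have h1 : IsCoprime P (5:ℤ) := hco.of_isCoprime_of_dvd_right h5
    have h2 : IsCoprime P ((5:ℤ)^3) := h1.pow_right
    norm_num at h2
    exact h2.symm
  have h125 : (125:ℤ) ∣ Q := by
    have hdvd : (125:ℤ) ∣ Q * P := ⟨R^4, by rw [mul_comm]; exact h⟩
    exact hco5.dvd_of_dvd_mul_right hdvd
  obtain ⟨Q', hQ'⟩ := h125
  have hPQ' : P * Q' = R^4 := by
    have h' : 125 * (P * Q') = 125 * R^4 := by rw [← h, hQ']; ring
    exact mul_left_cancel₀ (by norm_num) h'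
  have hcoPQ' : IsCoprime P Q' := hco.of_isCoprime_of_dvd_right ⟨125, by rw [hQ']; ring⟩
  obtain ⟨a, ha⟩ := Int.sq_of_isCoprime hcoPQ' (show P * Q' = (R^2)^2 by rw [hPQ']; ring)
  obtain ⟨b, hb⟩ := Int.sq_of_isCoprime hcoPQ'.symm (show Q' * P = (R^2)^2 by rw [mul_comm, hPQ']; ring)
  have hR4 : (0:ℤ) < R^4 := by positivity
  have hcoab : IsCoprime a b := by
    have h1 : a ∣ P := by rcases ha with h'|h' <;> [exact ⟨a, by rw [h']; ring⟩; exact ⟨-a, by rw [h']; ring⟩]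
    have h2 : b ∣ Q' := by rcases hb with h'|h' <;> [exact ⟨b, by rw [h']; ring⟩; exact ⟨-b, by rw [h']; ring⟩]
    exact (hcoPQ'.of_isCoprime_of_dvd_left h1).of_isCoprime_of_dvd_right h2
  rcases ha with h1|h1 <;> rcases hb with h2|h2
  · have hab : a^2*b^2 = R^4 := by rw [← h1, ← h2]; exact hPQ'
    obtain ⟨s, t, hs, ht, hst⟩ := sq4 a b R hcoab hab
    exact ⟨s, t, hst, Or.inl ⟨by rw [h1, hs], by rw [hQ', h2, ht]⟩⟩
  · exfalso; rw [h1, h2] at hPQ'; nlinarith [sq_nonneg (a*b), hR4]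
  · exfalso; rw [h1, h2] at hPQ'; nlinarith [sq_nonneg (a*b), hR4]
  · have hab : a^2*b^2 = R^4 := by rw [h1, h2] at hPQ'; linear_combination hPQ'
    obtain ⟨s, t, hs, ht, hst⟩ := sq4 a b R hcoab hab
    exact ⟨s, t, hst, Or.inr ⟨by rw [h1, hs], by rw [hQ', h2, ht]; ring⟩⟩

private lemma lemF (P Q R : ℤ) (hR : R ≠ 0) (hco : IsCoprime P Q)
    (h : P * Q = 125 * R^4) :
    ∃ s t : ℤ, (s*t)^2 = R^2 ∧
      ((P = s^4 ∧ Q = 125*t^4) ∨ (P = 125*s^4 ∧ Q = t^4) ∨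
       (P = -s^4 ∧ Q = -(125*t^4)) ∨ (P = -(125*s^4) ∧ Q = -t^4)) := by
  have h5 : (5:ℤ) ∣ P ∨ (5:ℤ) ∣ Q := by
    have : (5:ℤ) ∣ P * Q := ⟨25 * R^4, by rw [h]; ring⟩
    exact (prime5.dvd_mul.mp this)
  rcases h5 with h5|h5
  · obtain ⟨s, t, hst, hd⟩ := lemF0 Q P R hR hco.symm (by rw [mul_comm]; exact h) h5
    refine ⟨t, s, by rw [mul_comm t s]; exact hst, ?_⟩
    rcases hd with ⟨hq, hp⟩|⟨hq, hp⟩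
    · exact Or.inr (Or.inl ⟨hp, hq⟩)
    · exact Or.inr (Or.inr (Or.inr ⟨by rw [hp], hq⟩))
  · obtain ⟨s, t, hst, hd⟩ := lemF0 P Q R hR hco h h5
    rcases hd with h'|h'
    · exact ⟨s, t, hst, Or.inl h'⟩
    · exact ⟨s, t, hst, Or.inr (Or.inr (Or.inl h'))⟩

private lemma coprime_of_no_prime (a b : ℤ)
    (h : ∀ p : ℕ, p.Prime → (p:ℤ) ∣ a → (p:ℤ) ∣ b → False) : IsCoprime a b := by
  rw [Int.isCoprime_iff_gcd_eq_one]
  by_contra hg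
  obtain ⟨p, hp, hpd⟩ := Nat.exists_prime_and_dvd hg
  exact h p hp (dvd_trans (Int.natCast_dvd_natCast.mpr hpd) (Int.gcd_dvd_left _ _))
    (dvd_trans (Int.natCast_dvd_natCast.mpr hpd) (Int.gcd_dvd_right _ _))

private lemma not_unit_5 : ¬ IsUnit (5:ℤ) := by
  rw [Int.isUnit_iff]; omega

/-- In (A): 5 cannot divide u. -/
private lemma no5u (u e v : ℤ) (hco : IsCoprime u e)
    (h : v^2 = u^4 + 25*u^2*e^2 + 125*e^4) : ¬ (5:ℤ) ∣ u := by
  rintro ⟨u₁, rfl⟩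
  have h51 : (5:ℤ) ∣ v^2 := ⟨125*u₁^4 + 125*u₁^2*e^2 + 25*e^4, by linear_combination h⟩
  obtain ⟨v₁, rfl⟩ := prime5.dvd_of_dvd_pow h51
  have h1 : v₁^2 = 25*u₁^4 + 25*u₁^2*e^2 + 5*e^4 := by
    have h5 : 25 * v₁^2 = 25 * (25*u₁^4 + 25*u₁^2*e^2 + 5*e^4) := by linear_combination h
    exact mul_left_cancel₀ (by norm_num) h5
  have h52 : (5:ℤ) ∣ v₁^2 := ⟨5*u₁^4 + 5*u₁^2*e^2 + e^4, by linear_combination h1⟩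
  obtain ⟨v₂, rfl⟩ := prime5.dvd_of_dvd_pow h52
  have h2 : 5*v₂^2 = 5*u₁^4 + 5*u₁^2*e^2 + e^4 := by
    have h5 : 5*(5*v₂^2) = 5*(5*u₁^4 + 5*u₁^2*e^2 + e^4) := by linear_combination h1
    exact mul_left_cancel₀ (by norm_num) h5
  have h53 : (5:ℤ) ∣ e^4 := ⟨v₂^2 - u₁^4 - u₁^2*e^2, by linear_combination -h2⟩
  have h5e : (5:ℤ) ∣ e := prime5.dvd_of_dvd_pow h53
  exact not_unit_5 (hco.isUnit_of_dvd' ⟨u₁, rfl⟩ h5e)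

/-- In (A'): 5 cannot divide c. -/
private lemma no5c (b c V : ℤ) (hco : IsCoprime b c)
    (h : V^2 = c^4 - 50*c^2*b^2 + 125*b^4) : ¬ (5:ℤ) ∣ c := by
  rintro ⟨c₁, rfl⟩
  have h51 : (5:ℤ) ∣ V^2 := ⟨125*c₁^4 - 250*c₁^2*b^2 + 25*b^4, by linear_combination h⟩
  obtain ⟨V₁, rfl⟩ := prime5.dvd_of_dvd_pow h51
  have h1 : V₁^2 = 25*c₁^4 - 50*c₁^2*b^2 + 5*b^4 := by
    have h5 : 25 * V₁^2 = 25 * (25*c₁^4 - 50*c₁^2*b^2 + 5*b^4) := by linear_combination h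
    exact mul_left_cancel₀ (by norm_num) h5
  have h52 : (5:ℤ) ∣ V₁^2 := ⟨5*c₁^4 - 10*c₁^2*b^2 + b^4, by linear_combination h1⟩
  obtain ⟨V₂, rfl⟩ := prime5.dvd_of_dvd_pow h52
  have h2 : 5*V₂^2 = 5*c₁^4 - 10*c₁^2*b^2 + b^4 := by
    have h5 : 5*(5*V₂^2) = 5*(5*c₁^4 - 10*c₁^2*b^2 + b^4) := by linear_combination h1
    exact mul_left_cancel₀ (by norm_num) h5
  have h53 : (5:ℤ) ∣ b^4 := ⟨V₂^2 - c₁^4 + 2*c₁^2*b^2, by linear_combination -h2⟩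
  exact not_unit_5 (hco.isUnit_of_dvd' (prime5.dvd_of_dvd_pow h53) ⟨c₁, rfl⟩)

/-- Statement (A) at level m. -/
private def StA (m : ℕ) : Prop :=
  ∀ u e v : ℤ, e.natAbs = m → IsCoprime u e → e ≠ 0 →
    v^2 = u^4 + 25*u^2*e^2 + 125*e^4 → False

/-- Descent through the quartic (A') : V² = c⁴ - 50c²b² + 125b⁴. -/
private lemma lemA'step (n : ℕ) (IH : ∀ m, m < n → StA m)
    (e : ℤ) (hn : e.natAbs = n) (b c V : ℤ) (hco : IsCoprime b c) (hb : b ≠ 0) (hc : c ≠ 0)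
    (hbound : b^2*c^2 ≤ e^2) (hV : V^2 = c^4 - 50*c^2*b^2 + 125*b^4) : False := by
  have h5c : ¬ (5:ℤ) ∣ c := no5c b c V hco hV
  have hbe : (2:ℤ) ∣ b := lemA'even b c V hV
  have hcodd : Odd c := by
    rcases Int.even_or_odd c with h'|h'
    · exact absurd (hco.isUnit_of_dvd' hbe h'.two_dvd) (by rw [Int.isUnit_iff]; omega)
    · exact h'
  obtain ⟨m, hbm⟩ := hbe
  have hVodd : Odd V := by
    rcases Int.even_or_odd V with h'|h'
    · exfalso
      obtain ⟨k, hk⟩ := h'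
      have : Even (c^4) := ⟨2*k^2 + 100*c^2*m^2 - 1000*m^4, by
        rw [hbm] at hV
        linear_combination (-1)*hV + (V + 2*k)*hk⟩
      have hce : Even c := (Int.even_pow.mp this).1
      exact (Int.not_odd_iff_even.mpr hce) hcodd
    · exact h'
  have hB1e : Even (c^2 - 25*b^2 - V) := by
    have h1 : Odd (c^2 - 25*b^2) := (hcodd.pow).sub_even ⟨50*m^2, by rw [hbm]; ring⟩
    exact h1.sub_odd hVodd
  obtain ⟨C₁, hC1⟩ := hB1e
  have hVeq : V = c^2 - 25*b^2 - 2*C₁ := by linarith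
  subst hVeq
  set D : ℤ := c^2 - 25*b^2 - C₁ with hD
  have hCprod : C₁ * D = 125 * b^4 := by
    have h4 : 4*(C₁ * D) = 4*(125 * b^4) := by rw [hD]; linear_combination (-1)*hV
    exact mul_left_cancel₀ (by norm_num : (4:ℤ) ≠ 0) h4
  have hCsum : C₁ + D = c^2 - 25*b^2 := by rw [hD]; ring
  have hCodd : Odd (c^2 - 25*b^2) := (hcodd.pow).sub_even ⟨50*m^2, by rw [hbm]; ring⟩
  have hcoC : IsCoprime C₁ D := by
    apply coprime_of_no_prime
    intro p hp h1 h2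
    have hpsum : (p:ℤ) ∣ c^2 - 25*b^2 := hCsum ▸ dvd_add h1 h2
    have hpprod : (p:ℤ) ∣ 125 * b^4 := hCprod ▸ h1.mul_right D
    have hpp : Prime (p:ℤ) := Nat.prime_iff_prime_int.mp hp
    have hp2 : p ≠ 2 := by
      rintro rfl
      obtain ⟨r, hr⟩ := hpsum
      obtain ⟨j, hj⟩ := hCodd
      omega
    rcases hpp.dvd_mul.mp hpprod with h'|h'
    · have hp5 : (p:ℤ) = 5 := by
        have h53 : (p:ℤ) ∣ (5:ℤ)^3 := by norm_num; exact h'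
        have h5' := hpp.dvd_of_dvd_pow h53
        have h5n : p ∣ 5 := by exact_mod_cast h5'
        have := (Nat.prime_dvd_prime_iff_eq hp (by norm_num)).mp h5n
        exact_mod_cast this
      rw [hp5] at hpsum
      have h5c2 : (5:ℤ) ∣ c^2 := by
        have h25 : (5:ℤ) ∣ 25*(b*b) := ⟨5*(b*b), by ring⟩
        have hadd := dvd_add hpsum h25
        have hid : c^2 - 25*b^2 + 25*(b*b) = c^2 := by ring
        rwa [hid] at hadd
      exact h5c (prime5.dvd_of_dvd_pow h5c2)
    · have hpb : (p:ℤ) ∣ b := hpp.dvd_of_dvd_pow h'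
      have hpc2 : (p:ℤ) ∣ c^2 := by
        have h25 : (p:ℤ) ∣ 25*(b*b) := (hpb.mul_right b).mul_left 25
        have hadd := dvd_add hpsum h25
        have hid : c^2 - 25*b^2 + 25*(b*b) = c^2 := by ring
        rwa [hid] at hadd
      have hpc : (p:ℤ) ∣ c := hpp.dvd_of_dvd_pow hpc2
      have := hco.isUnit_of_dvd' hpb hpc
      rw [Int.isUnit_iff] at this
      have := hp.two_le
      omega
  obtain ⟨s, t, hst, hd⟩ := lemF C₁ D b hb hcoC hCprod
  have posCase : ∀ σ τ : ℤ, IsCoprime σ τ → (σ*τ)^2 = b^2 →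
      σ^4 + 125*τ^4 = c^2 - 25*b^2 → False := by
    intro σ τ hcoστ hb2 hpos
    have hτ0 : τ ≠ 0 := by
      rintro rfl
      simp at hb2
      exact hb (by nlinarith [hb2])
    have hσ0 : σ ≠ 0 := by
      rintro rfl
      simp at hb2
      exact hb (by nlinarith [hb2])
    have hσ4 : 1 ≤ σ^4 := by
      have h0 : 0 < σ^4 := by positivity
      linarith [Int.lt_iff_add_one_le.mp h0]
    have hτ4 : 1 ≤ τ^4 := by
      have h0 : 0 < τ^4 := by positivity
      linarith [Int.lt_iff_add_one_le.mp h0]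
    have hσ2 : 1 ≤ σ^2 := by
      have h0 : 0 < σ^2 := by positivity
      linarith [Int.lt_iff_add_one_le.mp h0]
    have hτ2 : 1 ≤ τ^2 := by
      have h0 : 0 < τ^2 := by positivity
      linarith [Int.lt_iff_add_one_le.mp h0]
    have hb1 : 1 ≤ b^2 := by
      have h0 : 0 < b^2 := by positivity
      linarith [Int.lt_iff_add_one_le.mp h0]
    have hceq : c^2 = σ^4 + 25*σ^2*τ^2 + 125*τ^4 := by
      linear_combination (-1)*hpos + (-25)*hb2
    have hτb : τ^2 ≤ b^2 := by nlinarith [mul_nonneg (sq_nonneg τ) (sub_nonneg.mpr hσ2)]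
    have hc2b : 25*b^2 + 126 ≤ c^2 := by linarith
    have hprod : b^2*(25*b^2+126) ≤ b^2*c^2 := by
      apply mul_le_mul_of_nonneg_left hc2b (sq_nonneg b)
    have hτe : τ^2 < e^2 := by nlinarith
    have hnat : τ.natAbs < e.natAbs := by
      have h1 : ((τ.natAbs:ℤ))^2 = τ^2 := by rw [← Int.abs_eq_natAbs, sq_abs]
      have h2 : ((e.natAbs:ℤ))^2 = e^2 := by rw [← Int.abs_eq_natAbs, sq_abs]
      have h3 : τ.natAbs^2 < e.natAbs^2 := by
        have : ((τ.natAbs:ℤ))^2 < ((e.natAbs:ℤ))^2 := by rw [h1, h2]; exact hτe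
        exact_mod_cast this
      exact lt_of_pow_lt_pow_left₀ 2 (Nat.zero_le _) h3
    exact IH τ.natAbs (hn ▸ hnat) σ τ c rfl hcoστ hτ0 hceq
  have negCase : ∀ σ τ : ℤ, IsCoprime σ τ → (σ*τ)^2 = b^2 →
      -(σ^4) - 125*τ^4 = c^2 - 25*b^2 → False := by
    intro σ τ hcoστ hb2 hneg
    exact lemC σ τ c hcoστ (by linear_combination hneg + 25*hb2)
  have hcop_of : ∀ x y : ℤ, x ∣ C₁ → y ∣ D → IsCoprime x y := fun x y hx hy =>
    (hcoC.of_isCoprime_of_dvd_left hx).of_isCoprime_of_dvd_right hy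
  rcases hd with ⟨h1,h2⟩|⟨h1,h2⟩|⟨h1,h2⟩|⟨h1,h2⟩
  · exact posCase s t (hcop_of s t ⟨s^3, by rw [h1]; ring⟩ ⟨125*t^3, by rw [h2]; ring⟩)
      hst (by linarith [hCsum, h1, h2])
  · exact posCase t s ((hcop_of s t ⟨125*s^3, by rw [h1]; ring⟩ ⟨t^3, by rw [h2]; ring⟩).symm)
      (by rw [mul_comm t s]; exact hst) (by linarith [hCsum, h1, h2])
  · exact negCase s t (hcop_of s t ⟨-(s^3), by rw [h1]; ring⟩ ⟨-(125*t^3), by rw [h2]; ring⟩)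
      hst (by linarith [hCsum, h1, h2])
  · exact negCase t s ((hcop_of s t ⟨-(125*s^3), by rw [h1]; ring⟩ ⟨-(t^3), by rw [h2]; ring⟩).symm)
      (by rw [mul_comm t s]; exact hst) (by linarith [hCsum, h1, h2])

set_option maxHeartbeats 1000000 in
private lemma lemA : ∀ n : ℕ, StA n := by
  intro n
  induction n using Nat.strong_induction_on with
  | _ n IH =>
  intro u e v hn hco he h
  obtain ⟨w, hw0, hweq⟩ : ∃ w : ℤ, 0 ≤ w ∧ w^2 = u^4+25*u^2*e^2+125*e^4 :=
    ⟨|v|, abs_nonneg v, by rw [sq_abs]; exact h⟩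
  have hu0 : u ≠ 0 := by
    rintro rfl
    have hunit : IsUnit e := isCoprime_zero_left.mp hco
    rw [Int.isUnit_iff] at hunit
    have h125 : w^2 = 125 := by rcases hunit with rfl|rfl <;> norm_num at hweq <;> linarith
    have hmod : ((w : ZMod 8))^2 = 125 := by exact_mod_cast congrArg (fun z : ℤ => (z : ZMod 8)) h125
    have hdec : ∀ z : ZMod 8, z^2 ≠ 125 := by decide
    exact hdec _ hmod
  have h5u : ¬(5:ℤ) ∣ u := no5u u e w hco hweq
  have he2 : 0 < e^2 := by positivity
  have hu2 : 0 < u^2 := by positivity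
  rcases Int.even_or_odd e with heven|hodd
  · -- e even
    obtain ⟨m0, hm0⟩ := heven
    have hem : e = 2*m0 := by omega
    subst hem
    have hm0ne : m0 ≠ 0 := by intro h'; exact he (by rw [h']; ring)
    have hu_odd : Odd u := by
      rcases Int.even_or_odd u with h'|h'
      · exact absurd (hco.isUnit_of_dvd' h'.two_dvd ⟨m0, by ring⟩)
          (by rw [Int.isUnit_iff]; omega)
      · exact h'
    have hw_odd : Odd w := by
      rcases Int.even_or_odd w with h'|h'
      · exfalso
        obtain ⟨k, hk⟩ := h'
        have : Even (u^4) := ⟨2*k^2 - 50*u^2*m0^2 - 1000*m0^4, by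
          linear_combination (-1)*hweq + (w + 2*k)*hk⟩
        exact (Int.not_odd_iff_even.mpr (Int.even_pow.mp this).1) hu_odd
      · exact h'
    obtain ⟨a, ha⟩ := (hu_odd.pow (n := 2)).sub_odd hw_odd
    have hwa : w = u^2 - 2*a := by linarith
    subst hwa
    have hXY : (a + 25*m0^2) * (u^2 - a + 25*m0^2) = 125*m0^4 := by
      have h4 : 4*((a + 25*m0^2) * (u^2 - a + 25*m0^2)) = 4*(125*m0^4) := by
        linear_combination (-1)*hweq
      exact mul_left_cancel₀ (by norm_num : (4:ℤ) ≠ 0) h4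
    have hOsum : Odd (u^2 + 50*m0^2) := (hu_odd.pow).add_even ⟨25*m0^2, by ring⟩
    have hcoXY : IsCoprime (a + 25*m0^2) (u^2 - a + 25*m0^2) := by
      apply coprime_of_no_prime
      intro p hp h1 h2
      have hpp : Prime (p:ℤ) := Nat.prime_iff_prime_int.mp hp
      have hpsum : (p:ℤ) ∣ u^2 + 50*m0^2 := by
        have := dvd_add h1 h2
        have hid : (a + 25*m0^2) + (u^2 - a + 25*m0^2) = u^2 + 50*m0^2 := by ring
        rwa [hid] at this
      have hpprod : (p:ℤ) ∣ 125*m0^4 := hXY ▸ h1.mul_right _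
      have hp2 : p ≠ 2 := by
        rintro rfl
        obtain ⟨r, hr⟩ : (2:ℤ) ∣ u^2 + 50*m0^2 := by exact_mod_cast hpsum
        obtain ⟨j, hj⟩ := hOsum
        omega
      rcases hpp.dvd_mul.mp hpprod with h'|h'
      · have hp5 : (p:ℤ) = 5 := by
          have h53 : (p:ℤ) ∣ (5:ℤ)^3 := by norm_num; exact h'
          have h5n : p ∣ 5 := by exact_mod_cast hpp.dvd_of_dvd_pow h53
          exact_mod_cast (Nat.prime_dvd_prime_iff_eq hp (by norm_num)).mp h5n
        rw [hp5] at hpsum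
        have h5u2 : (5:ℤ) ∣ u^2 := by
          have hsub := dvd_sub hpsum (⟨10*m0^2, by ring⟩ : (5:ℤ) ∣ 50*m0^2)
          have hid : u^2 + 50*m0^2 - 50*m0^2 = u^2 := by ring
          rwa [hid] at hsub
        exact h5u (prime5.dvd_of_dvd_pow h5u2)
      · have hpm : (p:ℤ) ∣ m0 := hpp.dvd_of_dvd_pow h'
        have hpu2 : (p:ℤ) ∣ u^2 := by
          have hsub := dvd_sub hpsum ((dvd_pow hpm two_ne_zero).mul_left 50)
          have hid : u^2 + 50*m0^2 - 50*m0^2 = u^2 := by ring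
          rwa [hid] at hsub
        have := hco.isUnit_of_dvd' (hpp.dvd_of_dvd_pow hpu2) (hpm.mul_left 2)
        rw [Int.isUnit_iff] at this
        have := hp.two_le
        omega
    obtain ⟨s, t, hst, hd⟩ := lemF _ _ m0 hm0ne hcoXY hXY
    have hcop_of : ∀ x y : ℤ, x ∣ (a + 25*m0^2) → y ∣ (u^2 - a + 25*m0^2) → IsCoprime x y :=
      fun x y hx hy => (hcoXY.of_isCoprime_of_dvd_left hx).of_isCoprime_of_dvd_right hy
    have hbnd : ∀ b' c' : ℤ, (b'*c')^2 = m0^2 → b'^2*c'^2 ≤ (2*m0)^2 := by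
      intro b' c' h'
      nlinarith [sq_nonneg m0, h']
    have hne : ∀ b' c' : ℤ, (b'*c')^2 = m0^2 → b' ≠ 0 ∧ c' ≠ 0 := by
      intro b' c' h'
      constructor <;> rintro rfl <;> simp at h' <;>
        [exact hm0ne (by nlinarith [h']); exact hm0ne (by nlinarith [h'])]
    rcases hd with ⟨h1,h2⟩|⟨h1,h2⟩|⟨h1,h2⟩|⟨h1,h2⟩
    · have hsum : s^4 + 125*t^4 = u^2 + 50*m0^2 := by linarith [h1, h2]
      have heq : u^2 = s^4 - 50*s^2*t^2 + 125*t^4 := by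
        linear_combination (-1)*hsum + 50*hst
      exact lemA'step n IH (2*m0) hn t s u
        ((hcop_of s t ⟨s^3, by rw [h1]; ring⟩ ⟨125*t^3, by rw [h2]; ring⟩).symm)
        (hne t s (by rw [mul_comm t s]; exact hst)).1 (hne t s (by rw [mul_comm t s]; exact hst)).2
        (hbnd t s (by rw [mul_comm t s]; exact hst)) heq
    · have hsum : 125*s^4 + t^4 = u^2 + 50*m0^2 := by linarith [h1, h2]
      have heq : u^2 = t^4 - 50*t^2*s^2 + 125*s^4 := by
        linear_combination (-1)*hsum + 50*hst
      exact lemA'step n IH (2*m0) hn s t u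
        (hcop_of s t ⟨125*s^3, by rw [h1]; ring⟩ ⟨t^3, by rw [h2]; ring⟩)
        (hne s t hst).1 (hne s t hst).2 (hbnd s t hst) heq
    · exfalso
      have hsum : -s^4 - 125*t^4 = u^2 + 50*m0^2 := by linarith [h1, h2]
      nlinarith [sq_nonneg (s^2), sq_nonneg (t^2), sq_nonneg m0]
    · exfalso
      have hsum : -(125*s^4) - t^4 = u^2 + 50*m0^2 := by linarith [h1, h2]
      nlinarith [sq_nonneg (s^2), sq_nonneg (t^2), sq_nonneg m0]
  · -- e odd
    have hA : (2*u^2+25*e^2-2*w) * (2*u^2+25*e^2+2*w) = 125*e^4 := by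
      linear_combination (-4)*hweq
    have hOsum : Odd (25*e^2) := Odd.mul (by decide) (hodd.pow)
    have hcoA : IsCoprime (2*u^2+25*e^2-2*w) (2*u^2+25*e^2+2*w) := by
      apply coprime_of_no_prime
      intro p hp h1 h2
      have hpp : Prime (p:ℤ) := Nat.prime_iff_prime_int.mp hp
      have hpsum : (p:ℤ) ∣ 4*u^2 + 50*e^2 := by
        have := dvd_add h1 h2
        have hid : (2*u^2+25*e^2-2*w) + (2*u^2+25*e^2+2*w) = 4*u^2 + 50*e^2 := by ring
        rwa [hid] at this
      have hpprod : (p:ℤ) ∣ 125*e^4 := hA ▸ h1.mul_right _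
      have hp2 : p ≠ 2 := by
        rintro rfl
        obtain ⟨r, hr⟩ : (2:ℤ) ∣ 2*u^2+25*e^2-2*w := by exact_mod_cast h1
        obtain ⟨j, hj⟩ := hOsum
        omega
      rcases hpp.dvd_mul.mp hpprod with h'|h'
      · have hp5 : (p:ℤ) = 5 := by
          have h53 : (p:ℤ) ∣ (5:ℤ)^3 := by norm_num; exact h'
          have h5n : p ∣ 5 := by exact_mod_cast hpp.dvd_of_dvd_pow h53
          exact_mod_cast (Nat.prime_dvd_prime_iff_eq hp (by norm_num)).mp h5n
        rw [hp5] at hpsum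
        have h5u2 : (5:ℤ) ∣ 4*u^2 := by
          have hsub := dvd_sub hpsum (⟨10*e^2, by ring⟩ : (5:ℤ) ∣ 50*e^2)
          have hid : 4*u^2 + 50*e^2 - 50*e^2 = 4*u^2 := by ring
          rwa [hid] at hsub
        rcases prime5.dvd_mul.mp h5u2 with h''|h''
        · norm_num at h''
        · exact h5u (prime5.dvd_of_dvd_pow h'')
      · have hpe : (p:ℤ) ∣ e := hpp.dvd_of_dvd_pow h'
        have hpu2 : (p:ℤ) ∣ 4*u^2 := by
          have hsub := dvd_sub hpsum ((dvd_pow hpe two_ne_zero).mul_left 50)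
          have hid : 4*u^2 + 50*e^2 - 50*e^2 = 4*u^2 := by ring
          rwa [hid] at hsub
        rcases hpp.dvd_mul.mp hpu2 with h''|h''
        · have : (p:ℤ) ∣ (2:ℤ)^2 := by norm_num; exact h''
          have h2n : p ∣ 2 := by exact_mod_cast hpp.dvd_of_dvd_pow this
          exact hp2 ((Nat.prime_dvd_prime_iff_eq hp (by norm_num)).mp h2n)
        · have := hco.isUnit_of_dvd' (hpp.dvd_of_dvd_pow h'') hpe
          rw [Int.isUnit_iff] at this
          have := hp.two_le
          omega
    obtain ⟨s, t, hst, hd⟩ := lemF _ _ e he hcoA hA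
    have hcop_of : ∀ x y : ℤ, x ∣ (2*u^2+25*e^2-2*w) → y ∣ (2*u^2+25*e^2+2*w) → IsCoprime x y :=
      fun x y hx hy => (hcoA.of_isCoprime_of_dvd_left hx).of_isCoprime_of_dvd_right hy
    have hbnd : ∀ b' c' : ℤ, (b'*c')^2 = e^2 → b'^2*c'^2 ≤ e^2 := by
      intro b' c' h'
      nlinarith [h']
    have hne : ∀ b' c' : ℤ, (b'*c')^2 = e^2 → b' ≠ 0 ∧ c' ≠ 0 := by
      intro b' c' h'
      constructor <;> rintro rfl <;> simp at h' <;>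
        [exact he (by nlinarith [h']); exact he (by nlinarith [h'])]
    rcases hd with ⟨h1,h2⟩|⟨h1,h2⟩|⟨h1,h2⟩|⟨h1,h2⟩
    · have hsum : s^4 + 125*t^4 = 4*u^2 + 50*e^2 := by linarith [h1, h2]
      have heq : (2*u)^2 = s^4 - 50*s^2*t^2 + 125*t^4 := by
        linear_combination (-1)*hsum + 50*hst
      exact lemA'step n IH e hn t s (2*u)
        ((hcop_of s t ⟨s^3, by rw [h1]; ring⟩ ⟨125*t^3, by rw [h2]; ring⟩).symm)
        (hne t s (by rw [mul_comm t s]; exact hst)).1 (hne t s (by rw [mul_comm t s]; exact hst)).2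
        (hbnd t s (by rw [mul_comm t s]; exact hst)) heq
    · have hsum : 125*s^4 + t^4 = 4*u^2 + 50*e^2 := by linarith [h1, h2]
      have heq : (2*u)^2 = t^4 - 50*t^2*s^2 + 125*s^4 := by
        linear_combination (-1)*hsum + 50*hst
      exact lemA'step n IH e hn s t (2*u)
        (hcop_of s t ⟨125*s^3, by rw [h1]; ring⟩ ⟨t^3, by rw [h2]; ring⟩)
        (hne s t hst).1 (hne s t hst).2 (hbnd s t hst) heq
    · exfalso
      have hsum : -s^4 - 125*t^4 = 4*u^2 + 50*e^2 := by linarith [h1, h2]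
      nlinarith [sq_nonneg (s^2), sq_nonneg (t^2)]
    · exfalso
      have hsum : -(125*s^4) - t^4 = 4*u^2 + 50*e^2 := by linarith [h1, h2]
      nlinarith [sq_nonneg (s^2), sq_nonneg (t^2)]

private lemma lemL (m e n : ℤ) (he : e ≠ 0) (hco : IsCoprime m e)
    (h : n^2 = m^3 + 25*m^2*e^2 + 125*m*e^4) : m = 0 := by
  by_contra hm0
  have h5e : ¬ ((5:ℤ) ∣ m ∧ (5:ℤ) ∣ e) := by
    rintro ⟨h1, h2⟩
    have := hco.isUnit_of_dvd' h1 h2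
    rw [Int.isUnit_iff] at this; omega
  by_cases h5m : (5:ℤ) ∣ m
  · -- 5 ∣ m : extract 5³
    obtain ⟨m₁, rfl⟩ := h5m
    obtain ⟨n₁, rfl⟩ := prime5.dvd_of_dvd_pow
      (⟨25*m₁^3+125*m₁^2*e^2+125*m₁*e^4, by linear_combination h⟩ : (5:ℤ) ∣ n^2)
    have h1 : 5*n₁^2 = 25*m₁^3+125*m₁^2*e^2+125*m₁*e^4 := by
      have h' : 5*(5*n₁^2) = 5*(25*m₁^3+125*m₁^2*e^2+125*m₁*e^4) := by linear_combination h
      exact mul_left_cancel₀ (by norm_num) h'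
    obtain ⟨n₂, rfl⟩ := prime5.dvd_of_dvd_pow
      (⟨m₁^3+5*m₁^2*e^2+5*m₁*e^4, by
        have h' : 5*(n₁^2) = 5*(5*(m₁^3+5*m₁^2*e^2+5*m₁*e^4)) := by linear_combination h1
        exact mul_left_cancel₀ (by norm_num) h'⟩ : (5:ℤ) ∣ n₁^2)
    have h2 : 5*n₂^2 = m₁^3+5*m₁^2*e^2+5*m₁*e^4 := by
      have h' : 25*(5*n₂^2) = 25*(m₁^3+5*m₁^2*e^2+5*m₁*e^4) := by linear_combination h1
      exact mul_left_cancel₀ (by norm_num) h'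
    obtain ⟨m₂, rfl⟩ := prime5.dvd_of_dvd_pow
      (⟨n₂^2-m₁^2*e^2-m₁*e^4, by linear_combination -h2⟩ : (5:ℤ) ∣ m₁^3)
    have h3 : n₂^2 = 25*m₂^3+25*m₂^2*e^2+5*m₂*e^4 := by
      have h' : 5*(n₂^2) = 5*(25*m₂^3+25*m₂^2*e^2+5*m₂*e^4) := by linear_combination h2
      exact mul_left_cancel₀ (by norm_num) h'
    obtain ⟨n₃, rfl⟩ := prime5.dvd_of_dvd_pow
      (⟨5*m₂^3+5*m₂^2*e^2+m₂*e^4, by linear_combination h3⟩ : (5:ℤ) ∣ n₂^2)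
    have h4 : 5*n₃^2 = 5*m₂^3+5*m₂^2*e^2+m₂*e^4 := by
      have h' : 5*(5*n₃^2) = 5*(5*m₂^3+5*m₂^2*e^2+m₂*e^4) := by linear_combination h3
      exact mul_left_cancel₀ (by norm_num) h'
    have h5m2 : (5:ℤ) ∣ m₂ := by
      have hd : (5:ℤ) ∣ m₂*e^4 := ⟨n₃^2-m₂^3-m₂^2*e^2, by linear_combination -h4⟩
      rcases prime5.dvd_mul.mp hd with h'|h'
      · exact h'
      · exact absurd ⟨⟨5*m₂, by ring⟩, prime5.dvd_of_dvd_pow h'⟩ h5e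
    obtain ⟨m₃, rfl⟩ := h5m2
    have h5 : n₃^2 = m₃ * (125*m₃^2+25*m₃*e^2+e^4) := by
      have h' : 5*(n₃^2) = 5*(m₃ * (125*m₃^2+25*m₃*e^2+e^4)) := by linear_combination h4
      exact mul_left_cancel₀ (by norm_num) h'
    have hm₃0 : m₃ ≠ 0 := by rintro rfl; exact hm0 (by ring)
    have hcom₃e : IsCoprime m₃ e := hco.of_isCoprime_of_dvd_left ⟨125, by ring⟩
    have hcoM : IsCoprime m₃ (125*m₃^2+25*m₃*e^2+e^4) := by
      have h' := (hcom₃e.pow_right (n := 4)).add_mul_left_right (125*m₃+25*e^2)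
      have hid : e^4 + m₃*(125*m₃+25*e^2) = 125*m₃^2+25*m₃*e^2+e^4 := by ring
      rwa [hid] at h'
    have hM0 : 125*m₃^2+25*m₃*e^2+e^4 ≠ 0 := by
      intro hM
      have h5e4 : (5:ℤ) ∣ e^4 := ⟨-(25*m₃^2+5*m₃*e^2), by linear_combination hM⟩
      exact h5e ⟨⟨25*m₃, by ring⟩, prime5.dvd_of_dvd_pow h5e4⟩
    obtain ⟨a, ha⟩ := Int.sq_of_isCoprime hcoM
      (by linear_combination (-1)*h5 : m₃ * (125*m₃^2+25*m₃*e^2+e^4) = n₃^2)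
    obtain ⟨b, hb⟩ := Int.sq_of_isCoprime hcoM.symm
      (by linear_combination (-1)*h5 : (125*m₃^2+25*m₃*e^2+e^4) * m₃ = n₃^2)
    have hcoea : IsCoprime e a := by
      rcases ha with h'|h' <;>
        [exact hcom₃e.symm.of_isCoprime_of_dvd_right ⟨a, by rw [h']; ring⟩;
         exact hcom₃e.symm.of_isCoprime_of_dvd_right ⟨-a, by rw [h']; ring⟩]
    have ha0 : a ≠ 0 := by rintro rfl; simp at ha; rcases ha with h'|h' <;> exact hm₃0 (by linarith)
    rcases ha with ha|ha <;> rcases hb with hb|hb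
    · -- m₃ = a², M = b² : quartic (A) with (u,e,v) = (e,a,b)
      refine lemA a.natAbs e a b rfl hcoea ha0 ?_
      linear_combination (-1)*hb + (125*m₃ + 125*a^2 + 25*e^2)*ha
    · -- m₃ = a², M = -b² : n₃² < 0
      exfalso
      have : n₃^2 = -(a*b)^2 := by rw [h5, hb, ha]; ring
      have hab : a*b = 0 := by nlinarith [sq_nonneg n₃, sq_nonneg (a*b)]
      rcases mul_eq_zero.mp hab with h'|h'
      · exact ha0 h'
      · rw [h'] at hb; simp at hb; exact hM0 hb
    · exfalso
      have : n₃^2 = -(a*b)^2 := by rw [h5, hb, ha]; ring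
      have hab : a*b = 0 := by nlinarith [sq_nonneg n₃, sq_nonneg (a*b)]
      rcases mul_eq_zero.mp hab with h'|h'
      · exact ha0 h'
      · rw [h'] at hb; simp at hb; exact hM0 hb
    · -- m₃ = -a², M = -b² : lemC
      exact lemC e a b hcoea (by linear_combination (-1)*hb + (125*m₃ - 125*a^2 + 25*e^2)*ha)
  · -- 5 ∤ m
    have hfac : m * (m^2+25*m*e^2+125*e^4) = n^2 := by linear_combination (-1)*h
    have hcoM : IsCoprime m (m^2+25*m*e^2+125*e^4) := by
      have hm5 : IsCoprime m (5:ℤ) := ((prime5.coprime_iff_not_dvd).mpr h5m).symm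
      have hm125 : IsCoprime m (125:ℤ) := by
        have := hm5.pow_right (n := 3)
        norm_num at this; exact this
      have hme4 : IsCoprime m (e^4) := hco.pow_right
      have h' := (hm125.mul_right hme4).add_mul_left_right (m+25*e^2)
      have hid : 125*e^4 + m*(m+25*e^2) = m^2+25*m*e^2+125*e^4 := by ring
      rwa [hid] at h'
    have hM0 : m^2+25*m*e^2+125*e^4 ≠ 0 := by
      intro hM
      have h5d : (5:ℤ) ∣ (2*m+25*e^2)^2 := ⟨25*e^4, by linear_combination 4*hM⟩
      have h5d' : (5:ℤ) ∣ 2*m+25*e^2 := prime5.dvd_of_dvd_pow h5d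
      have h5m' : (5:ℤ) ∣ 2*m := by
        have := dvd_sub h5d' (⟨5*e^2, by ring⟩ : (5:ℤ) ∣ 25*e^2)
        have hid : 2*m+25*e^2 - 25*e^2 = 2*m := by ring
        rwa [hid] at this
      rcases prime5.dvd_mul.mp h5m' with h'|h'
      · norm_num at h'
      · exact h5m h'
    obtain ⟨a, ha⟩ := Int.sq_of_isCoprime hcoM hfac
    obtain ⟨b, hb⟩ := Int.sq_of_isCoprime hcoM.symm
      (by linear_combination hfac : (m^2+25*m*e^2+125*e^4) * m = n^2)
    have hcoae : IsCoprime a e := by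
      rcases ha with h'|h' <;>
        [exact hco.of_isCoprime_of_dvd_left ⟨a, by rw [h']; ring⟩;
         exact hco.of_isCoprime_of_dvd_left ⟨-a, by rw [h']; ring⟩]
    have ha0 : a ≠ 0 := by rintro rfl; simp at ha; rcases ha with h'|h' <;> exact hm0 (by linarith)
    rcases ha with ha|ha <;> rcases hb with hb|hb
    · -- m = a² : quartic (A) with (u,e,v) = (a,e,b)
      refine lemA e.natAbs a e b rfl hcoae he ?_
      linear_combination (-1)*hb + (m + a^2 + 25*e^2)*ha
    · exfalso
      have : n^2 = -(a*b)^2 := by rw [← hfac, hb, ha]; ring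
      have hab : a*b = 0 := by nlinarith [sq_nonneg n, sq_nonneg (a*b)]
      rcases mul_eq_zero.mp hab with h'|h'
      · exact ha0 h'
      · rw [h'] at hb; simp at hb; exact hM0 hb
    · exfalso
      have : n^2 = -(a*b)^2 := by rw [← hfac, hb, ha]; ring
      have hab : a*b = 0 := by nlinarith [sq_nonneg n, sq_nonneg (a*b)]
      rcases mul_eq_zero.mp hab with h'|h'
      · exact ha0 h'
      · rw [h'] at hb; simp at hb; exact hM0 hb
    · -- m = -a² : lemC with (s,t,c) = (a,e,b)
      exact lemC a e b hcoae (by linear_combination (-1)*hb + (m - a^2 + 25*e^2)*ha)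

private lemma ratL (x y : ℚ) (h : y^2 = x^3 + 25*x^2 + 125*x) : x = 0 ∧ y = 0 := by
  have hq0 : 0 < (x.den:ℤ) := by exact_mod_cast x.pos
  have hd0 : 0 < (y.den:ℤ) := by exact_mod_cast y.pos
  set p : ℤ := x.num with hp
  set q : ℤ := (x.den : ℤ) with hqdef
  set nn : ℤ := y.num with hnn
  set d : ℤ := (y.den : ℤ) with hddef
  have hqQ : ((q:ℚ)) ≠ 0 := by exact_mod_cast hq0.ne'
  have hdQ : ((d:ℚ)) ≠ 0 := by exact_mod_cast hd0.ne'
  have hx : ((p:ℚ))/((q:ℚ)) = x := by exact_mod_cast Rat.num_div_den x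
  have hy : ((nn:ℚ))/((d:ℚ)) = y := by exact_mod_cast Rat.num_div_den y
  have h' : ((nn:ℚ)/d)^2 = ((p:ℚ)/q)^3 + 25*((p:ℚ)/q)^2 + 125*((p:ℚ)/q) := by
    rw [hx, hy]; exact h
  have key : nn^2 * q^3 = d^2 * (p^3 + 25*p^2*q + 125*p*q^2) := by
    have hQ : (nn:ℚ)^2 * (q:ℚ)^6 = (d:ℚ)^2 * ((p:ℚ)^3*(q:ℚ)^3 + 25*(p:ℚ)^2*(q:ℚ)^4 + 125*(p:ℚ)*(q:ℚ)^5) := by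
      field_simp at h'
      linear_combination (q:ℚ)^3 * h'
    have key6 : nn^2 * q^6 = d^2 * (p^3*q^3 + 25*p^2*q^4 + 125*p*q^5) := by exact_mod_cast hQ
    have hcan : q^3 * (nn^2 * q^3) = q^3 * (d^2 * (p^3 + 25*p^2*q + 125*p*q^2)) := by
      linear_combination key6
    exact mul_left_cancel₀ (by positivity) hcan
  have hpq : IsCoprime p q := by
    rw [Int.isCoprime_iff_gcd_eq_one]
    exact x.reduced
  have hnd : IsCoprime nn d := by
    rw [Int.isCoprime_iff_gcd_eq_one]
    exact y.reduced
  have hKq : IsCoprime (p^3 + 25*p^2*q + 125*p*q^2) q := by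
    have h'' : IsCoprime (p^3 + (25*p^2 + 125*p*q)*q) q := (hpq.pow_left).add_mul_right_left _
    have hid : p^3 + (25*p^2 + 125*p*q)*q = p^3 + 25*p^2*q + 125*p*q^2 := by ring
    rwa [hid] at h''
  have hd2q3 : d^2 ∣ q^3 := by
    have hdvd : d^2 ∣ nn^2 * q^3 := ⟨p^3 + 25*p^2*q + 125*p*q^2, key.symm ▸ rfl⟩
    exact (hnd.symm.pow).dvd_of_dvd_mul_left hdvd
  have hq3d2 : q^3 ∣ d^2 := by
    have hdvd : q^3 ∣ d^2 * (p^3 + 25*p^2*q + 125*p*q^2) := ⟨nn^2, by linear_combination -key⟩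
    exact (hKq.symm.pow_left).dvd_of_dvd_mul_right hdvd
  have hq3 : q^3 = d^2 := Int.dvd_antisymm (by positivity) (by positivity) hq3d2 hd2q3
  have hqd : q ∣ d := by
    have h2 : q^2 ∣ d^2 := hq3 ▸ ⟨q, by ring⟩
    exact (Int.pow_dvd_pow_iff two_ne_zero).mp h2
  obtain ⟨t, htd⟩ := hqd
  have hqt2 : q = t^2 := by
    have hcan : q^2 * q = q^2 * t^2 := by rw [htd] at hq3; linear_combination hq3
    exact mul_left_cancel₀ (by positivity) hcan
  have ht0 : t ≠ 0 := by rintro rfl; rw [hqt2] at hq0; norm_num at hq0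
  have hnK : nn^2 = p^3 + 25*p^2*q + 125*p*q^2 := by
    have hcan : q^3 * nn^2 = q^3 * (p^3 + 25*p^2*q + 125*p*q^2) := by
      linear_combination key - (p^3+25*p^2*q+125*p*q^2)*hq3
    exact mul_left_cancel₀ (by positivity) hcan
  have heqt : nn^2 = p^3 + 25*p^2*t^2 + 125*p*t^4 := by
    rw [hqt2] at hnK; linear_combination hnK
  have hpt : IsCoprime p t := hpq.of_isCoprime_of_dvd_right ⟨t, by rw [hqt2]; ring⟩
  have hp0 : p = 0 := lemL p t nn ht0 hpt heqt
  have hx0 : x = 0 := by rwa [Rat.num_eq_zero] at hp0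
  refine ⟨hx0, ?_⟩
  rw [hx0] at h
  norm_num at h
  exact h

theorem E10_classify (x y : ℚ) (h : y^2 = x^3+x^2-83*x+88) : x = 8 ∧ y = 0 := by
  have h' : y^2 = (x-8)^3 + 25*(x-8)^2 + 125*(x-8) := by linear_combination h
  obtain ⟨h0, hy⟩ := ratL (x-8) y h'
  exact ⟨by linarith, hy⟩


/-- The elliptic curve `E : y² = x³ + x² − 83x + 88` over `ℚ`. -/
noncomputable def E10 : WeierstrassCurve ℚ :=
  { a₁ := 0, a₂ := 1, a₃ := 0, a₄ := -83, a₆ := 88 }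

open WeierstrassCurve.Affine WeierstrassCurve.Affine.Point

/-- The Mordell–Weil group `E(ℚ)` of `E : y² = x³ + x² − 83x + 88` is isomorphic to `ℤ/2ℤ`. -/
theorem stmt_10 : Nonempty (E10.toAffine.Point ≃+ ZMod 2) := by
  classical
  have hP : E10.toAffine.Nonsingular 8 0 := by
    rw [nonsingular_iff, equation_iff]
    constructor
    · show (0:ℚ)^2 + E10.a₁ * 8 * 0 + E10.a₃ * 0 = 8^3 + E10.a₂*8^2 + E10.a₄*8+E10.a₆
      simp [E10]; norm_num
    · left
      show E10.a₁ * 0 ≠ 3*8^2 + 2*E10.a₂*8 + E10.a₄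
      simp [E10]; norm_num
  set P8 : E10.toAffine.Point := Point.some _ _ hP with hP8def
  have classify : ∀ Q : E10.toAffine.Point, Q = 0 ∨ Q = P8 := by
    rintro (_ | @⟨x, y, h⟩)
    · left; rfl
    · right
      have heq : y^2 = x^3+x^2-83*x+88 := by
        have h2 := (equation_iff ..).mp h.1
        have ha1 : E10.toAffine.a₁ = 0 := rfl
        have ha2 : E10.toAffine.a₂ = 1 := rfl
        have ha3 : E10.toAffine.a₃ = 0 := rfl
        have ha4 : E10.toAffine.a₄ = -83 := rfl
        have ha6 : E10.toAffine.a₆ = 88 := rfl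
        rw [ha1, ha2, ha3, ha4, ha6] at h2
        linarith
      obtain ⟨hx, hy⟩ := E10_classify x y heq
      subst hx; subst hy
      rfl
  have hPP : P8 + P8 = 0 := by
    apply add_self_of_Y_eq
    show (0:ℚ) = E10.toAffine.negY 8 0
    simp [negY, E10]
  have hPne : P8 ≠ 0 := some_ne_zero hP
  refine ⟨AddEquiv.mk' ⟨fun Q => if Q = 0 then 0 else 1, fun n => if n = 0 then 0 else P8, ?_, ?_⟩ ?_⟩
  · intro Q
    rcases classify Q with h | h <;> simp [h, hPne]
  · intro n
    fin_cases n
    · simp [hPne]; exact if_pos rfl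
    · simp [hPne]; exact if_neg one_ne_zero
  · intro a b
    rcases classify a with ha | ha <;> rcases classify b with hb | hb <;>
      subst ha <;> subst hb <;> simp [hPne, hPP] <;> decide
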